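/- arXiv:2108.12797 — 3 statements merged into one kernel-verified Lean document; each statement's English description precedes it below -/
import Mathlib

section
/- Let m ≥ 1 and let t, j be integers with 0 ≤ t ≤ j ≤ m-1. For n ≥ 0 let a_n denote the number of Deutsch paths of length n from height t to height j all of whose heights h_i satisfy 0 ≤ h_i ≤ m-1. Then in the formal power series ring ℤ[[v]], the series S = Σ_{n≥0} a_n · vⁿ · ((1+v+v²)⁻¹)ⁿ satisfies S · (1-v) · (1+v)^{j-t+2} · (1-v^{m+2}) = v^{j-t} · (1-v^{t+2}) · (1-v^{m-j+1}) · (1+v+v²). -/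
open PowerSeries Finset

/-- The power series `1 + v + v²` over `ℤ`. -/
noncomputable def q : PowerSeries ℤ := 1 + X + X ^ 2

/-- `v · (1+v+v²)⁻¹` as a formal power series over `ℤ`. -/
noncomputable def w : PowerSeries ℤ := X * PowerSeries.invOfUnit q 1

/-- `p` is a Deutsch path of length `n`: each step is either an up-step `+1`
or a down-step of arbitrary (negative) size. -/
def IsDeutschPath (n : ℕ) (p : Fin (n + 1) → ℤ) : Prop :=
  ∀ i : Fin n, p i.succ - p i.castSucc = 1 ∨ p i.succ - p i.castSucc ≤ -1

/-- Number of Deutsch paths of length `n` from height `a` to height `b`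
all of whose heights satisfy the predicate `P`. -/
noncomputable def pathCount (n : ℕ) (a b : ℤ) (P : ℤ → Prop) : ℕ :=
  Nat.card {p : Fin (n + 1) → ℤ //
    p 0 = a ∧ p (Fin.last n) = b ∧ (∀ i, P (p i)) ∧ IsDeutschPath n p}

/-- The power series `Σ_{n≥0} a_n · vⁿ · ((1+v+v²)⁻¹)ⁿ`.  Since the `n`-th
summand has order `≥ n`, its coefficient of `v^N` is the (finite) sum of the
corresponding coefficients of the summands with `n ≤ N`. -/
noncomputable def series (a : ℕ → ℕ) : PowerSeries ℤ :=
  PowerSeries.mk fun N => ∑ n ∈ range (N + 1), (a n : ℤ) * coeff N (w ^ n)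



noncomputable abbrev iq : PowerSeries ℤ := PowerSeries.invOfUnit q 1

lemma q_mul_iq : q * iq = 1 := by
  apply PowerSeries.mul_invOfUnit
  simp [q]

lemma w_eq : w = X * iq := rfl

lemma coeff_w_pow_lt {N n : ℕ} (h : N < n) : coeff N (w ^ n) = 0 := by
  rw [w_eq, mul_pow, mul_comm, PowerSeries.coeff_mul_X_pow']
  simp [Nat.not_le.mpr h]

lemma series_shift (a : ℕ → ℕ) :
    series a = C ((a 0 : ℤ)) + w * series (fun n => a (n + 1)) := by
  ext N
  rcases N with _ | M
  · simp [series, PowerSeries.coeff_zero_eq_constantCoeff, w_eq, mul_assoc]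
  · rw [map_add, PowerSeries.coeff_C, if_neg (Nat.succ_ne_zero M)]
    rw [w_eq, mul_assoc, PowerSeries.coeff_succ_X_mul]
    have key : ∀ k, coeff (M + 1) (w ^ (k+1)) = coeff M (iq * w ^ k) := by
      intro k
      rw [pow_succ', w_eq, mul_assoc, PowerSeries.coeff_succ_X_mul]
    rw [series, coeff_mk]
    -- LHS sum = a 0 * coeff_{M+1} (w^0) + Σ_{k<M+1} a (k+1) coeff_{M+1} w^{k+1}
    rw [Finset.sum_range_succ']
    have h0 : (a 0 : ℤ) * coeff (M+1) (w ^ 0) = 0 := by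
      simp
    rw [h0, add_zero, zero_add]
    simp only [key]
    -- now: Σ_{k ∈ range (M+1)} a (k+1) * coeff M (iq * w^k) = coeff M (iq * series b)
    rw [PowerSeries.coeff_mul]
    simp only [PowerSeries.coeff_mul, Finset.mul_sum]
    rw [Finset.sum_comm]
    apply Finset.sum_congr rfl
    intro p hp
    rw [series, coeff_mk, Finset.mul_sum]
    have h2 : range (p.2 + 1) ⊆ range (M + 1) := by
      intro x hx
      have := Finset.HasAntidiagonal.antidiagonal.snd_le hp
      simp only [Finset.mem_range] at *
      omega
    refine (Finset.sum_subset h2 ?_).symm.trans (Finset.sum_congr rfl ?_)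
    · intro x _ hnx
      have hx2 : p.2 < x := by
        simp only [Finset.mem_range] at hnx
        omega
      rw [coeff_w_pow_lt hx2]
      ring
    · intro k _
      ring
  
lemma series_add (a b : ℕ → ℕ) :
    series (fun n => a n + b n) = series a + series b := by
  ext N
  simp [series, add_mul, Finset.sum_add_distrib]

lemma series_sum {α : Type*} (F : Finset α) (f : α → ℕ → ℕ) :
    series (fun n => ∑ c ∈ F, f c n) = ∑ c ∈ F, series (f c) := by
  ext N
  simp only [series, coeff_mk, Nat.cast_sum, Finset.sum_mul]
  rw [Finset.sum_comm]
  simp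

lemma series_zero : series (fun _ => 0) = 0 := by
  ext N; simp [series]



section Paths
variable (m : ℕ)

def Pm : ℤ → Prop := fun x => 0 ≤ x ∧ x ≤ (m : ℤ) - 1

abbrev PathT (n : ℕ) (a b : ℤ) : Type :=
  {p : Fin (n + 1) → ℤ //
    p 0 = a ∧ p (Fin.last n) = b ∧ (∀ i, Pm m (p i)) ∧ IsDeutschPath n p}

lemma pathT_finite (n : ℕ) (a b : ℤ) : Finite (PathT m n a b) := by
  have : ∀ p : PathT m n a b, ∀ i, p.1 i ∈ Set.Icc (0 : ℤ) ((m : ℤ) - 1) := by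
    intro p i
    exact Set.mem_Icc.mpr (p.2.2.2.1 i)
  apply Finite.of_injective (fun p : PathT m n a b =>
    (fun i => (⟨p.1 i, this p i⟩ : Set.Icc (0 : ℤ) ((m : ℤ) - 1))))
  intro p1 p2 h
  apply Subtype.ext
  funext i
  exact congrArg Subtype.val (congrFun h i)

lemma pathCount_eq (n : ℕ) (a b : ℤ) :
    pathCount n a b (Pm m) = Nat.card (PathT m n a b) := rfl

lemma pathCount_zero (a b : ℤ) (ha : Pm m a) :
    pathCount 0 a b (Pm m) = if a = b then 1 else 0 := by
  rw [pathCount_eq]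
  split_ifs with hab
  · refine Nat.card_eq_one_iff_unique.mpr ⟨⟨fun p1 p2 => ?_⟩, ⟨⟨fun _ => a, rfl, hab ▸ rfl, fun _ => ha, fun i => i.elim0⟩⟩⟩
    apply Subtype.ext
    funext i
    rw [Fin.fin_one_eq_zero i, p1.2.1, p2.2.1]
  · have : IsEmpty (PathT m 0 a b) := by
      refine ⟨fun p => hab ?_⟩
      exact p.2.1.symm.trans p.2.2.1
    exact Nat.card_of_isEmpty

lemma pathCount_succ (n : ℕ) (a b : ℤ) (ha : Pm m a) :
    pathCount (n + 1) a b (Pm m) =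
      pathCount n (a + 1) b (Pm m) + ∑ c ∈ Finset.Icc (0 : ℤ) (a - 1), pathCount n c b (Pm m) := by
  classical
  have hnotmem : (a + 1) ∉ Finset.Icc (0 : ℤ) (a - 1) := by
    simp only [Finset.mem_Icc]
    omega
  set F : Finset ℤ := insert (a + 1) (Finset.Icc (0 : ℤ) (a - 1)) with hF
  -- the equivalence
  have e : PathT m (n + 1) a b ≃ (Σ c : F, PathT m n (c : ℤ) b) := by
    refine
      { toFun := fun p => ⟨⟨p.1 1, ?_⟩, ⟨fun i => p.1 i.succ, ?_, ?_, fun i => p.2.2.2.1 i.succ, fun i => ?_⟩⟩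
        invFun := fun x => ⟨fun i => Fin.cases a (fun k => x.2.1 k) i, ?_, ?_, fun i => ?_, fun i => ?_⟩
        left_inv := ?_
        right_inv := ?_ }
    · -- p.1 1 ∈ F
      have hd := p.2.2.2.2 0
      rw [Fin.succ_zero_eq_one, Fin.castSucc_zero, p.2.1] at hd
      have hP := p.2.2.2.1 1
      rcases hd with hd | hd
      · apply Finset.mem_insert.mpr; left; omega
      · apply Finset.mem_insert.mpr; right
        rw [Finset.mem_Icc]
        exact ⟨hP.1, by omega⟩
    · show (p.1 (Fin.succ 0) = p.1 1)
      exact congrArg p.1 Fin.succ_zero_eq_one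
    · show (p.1 (Fin.last n).succ = b)
      rw [Fin.succ_last]; exact p.2.2.1
    · have := p.2.2.2.2 i.succ
      rwa [← Fin.succ_castSucc] at this
    · -- invFun zero
      simp only [Fin.cases_zero]
    · -- invFun last
      show (Fin.cases a _ (Fin.last (n+1)) = b)
      rw [← Fin.succ_last]
      simp only [Fin.cases_succ]
      exact x.2.2.2.1
    · -- invFun P
      refine Fin.cases ?_ (fun k => ?_) i
      · simp only [Fin.cases_zero]; exact ha
      · simp only [Fin.cases_succ]; exact x.2.2.2.2.1 k
    · -- invFun Deutsch
      refine Fin.cases ?_ (fun k => ?_) i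
      · rw [Fin.castSucc_zero]
        simp only [Fin.cases_succ, Fin.cases_zero]
        rw [x.2.2.1]
        rcases Finset.mem_insert.mp x.1.2 with hc | hc
        · left; rw [hc]; ring
        · right; rw [Finset.mem_Icc] at hc; omega
      · rw [← Fin.succ_castSucc]
        simp only [Fin.cases_succ]
        exact x.2.2.2.2.2 k
    · -- left_inv
      intro p
      apply Subtype.ext
      funext i
      refine Fin.cases ?_ (fun k => ?_) i
      · simp only [Fin.cases_zero]; exact p.2.1.symm
      · simp only [Fin.cases_succ]
    · -- right_inv
      intro x
      refine Sigma.subtype_ext (Subtype.ext ?_) ?_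
      · show Fin.cases (motive := fun _ => ℤ) a _ 1 = _
        rw [show (1 : Fin (n+2)) = Fin.succ 0 from (Fin.succ_zero_eq_one).symm]
        simp only [Fin.cases_succ]
        exact x.2.2.1
      · funext i
        simp only [Fin.cases_succ]
  rw [pathCount_eq, Nat.card_congr e]
  haveI : ∀ c : ℤ, Fintype (PathT m n c b) := fun c => @Fintype.ofFinite _ (pathT_finite m n c b)
  rw [Nat.card_eq_fintype_card, Fintype.card_sigma]
  have : ∀ c : F, Fintype.card (PathT m n (c : ℤ) b) = pathCount n (c : ℤ) b (Pm m) := by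
    intro c
    rw [pathCount_eq, Nat.card_eq_fintype_card]
  simp_rw [this]
  rw [Finset.sum_coe_sort F (fun c => pathCount n c b (Pm m)), hF, Finset.sum_insert hnotmem]

end Paths


noncomputable def gg (m j : ℕ) (h : ℕ) : PowerSeries ℤ :=
  if h ≤ j then X ^ (j - h) * (1 + X) ^ h * (1 - X ^ (h + 2)) * (1 - X ^ (m - j + 1))
  else X * (1 - X ^ (j + 1)) * (1 + X) ^ h * (1 - X ^ (m - h))

lemma sumLow (m j : ℕ) : ∀ t k, t + k = j + 1 →
    X * ∑ h ∈ range t, gg m j h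
      = (1 - X ^ (m - j + 1)) *
          (X ^ (k + 1) * ((1 + X) ^ t - X ^ t) - X ^ (j + 2) * ((1 + X) ^ t - 1)) := by
  intro t
  induction t with
  | zero => intro k hk; simp
  | succ t ih =>
    intro k hk
    have h1 : t + (k + 1) = j + 1 := by omega
    have h2 : t ≤ j := by omega
    have h3 : j - t = k := by omega
    have h4 : j = t + k := by omega
    rw [Finset.sum_range_succ, mul_add, ih (k + 1) h1, gg, if_pos h2, h3]
    rw [h4]
    simp only [pow_add, pow_succ, pow_zero, pow_one]
    ring

lemma sumHigh (m j : ℕ) : ∀ c e, j + 1 + c + e = m →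
    X * ∑ h ∈ range (j + 1 + c), gg m j h
      = (1 - X ^ (m - j + 1)) *
          (X * ((1 + X) ^ (j + 1) - X ^ (j + 1)) - X ^ (j + 2) * ((1 + X) ^ (j + 1) - 1))
        + (1 - X ^ (j + 1)) *
          (X * ((1 + X) ^ (j + 1 + c) - (1 + X) ^ (j + 1))
            - X ^ (e + 3) * ((1 + X) ^ (j + 1 + c) - (1 + X) ^ (j + 1) * X ^ c)) := by
  intro c
  induction c with
  | zero =>
    intro e he
    rw [sumLow m j (j + 1) 0 (by omega)]
    simp only [pow_add, pow_succ, pow_zero, pow_one]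
    ring
  | succ c ih =>
    intro e he
    have h1 : j + 1 + c + (e + 1) = m := by omega
    have h2 : ¬ (j + 1 + c ≤ j) := by omega
    have h3 : m - (j + 1 + c) = e + 1 := by omega
    have h4 : j + 1 + (c + 1) = (j + 1 + c) + 1 := by omega
    rw [h4, Finset.sum_range_succ, mul_add, ih (e + 1) h1, gg, if_neg h2, h3]
    simp only [pow_add, pow_succ, pow_zero, pow_one]
    ring

lemma Everify (m j : ℕ) (hj : j + 1 ≤ m) (t : ℕ) (ht : t < m) :
    gg m j t * q
      = (if t = j then (1 + X) ^ (j + 2) * (1 - X) * (1 - X ^ (m + 2)) else 0)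
        + X * ((if t + 1 < m then gg m j (t + 1) else 0) + ∑ h ∈ range t, gg m j h) := by
  have hXS := fun t k hk => sumLow m j t k hk
  rcases lt_trichotomy t j with h | h | h
  · -- t < j
    have htm : t + 1 < m := by omega
    obtain ⟨a, rfl⟩ : ∃ a, j = t + 1 + a := ⟨j - t - 1, by omega⟩
    rw [if_neg (by omega), if_pos htm, zero_add]
    rw [mul_add, sumLow m (t + 1 + a) t (a + 2) (by omega)]
    rw [gg, if_pos (by omega : t ≤ t + 1 + a), gg, if_pos (by omega : t + 1 ≤ t + 1 + a)]
    rw [show t + 1 + a - t = a + 1 from by omega, show t + 1 + a - (t + 1) = a from by omega]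
    rw [q]
    simp only [pow_add, pow_succ, pow_zero, pow_one]
    ring
  · -- t = j
    subst h
    rw [if_pos rfl]
    by_cases htm : t + 1 < m
    · obtain ⟨b, hb⟩ : ∃ b, m = t + 2 + b := ⟨m - t - 2, by omega⟩
      rw [if_pos htm]
      rw [mul_add, sumLow m t t 1 (by omega)]
      rw [gg, if_pos le_rfl, gg, if_neg (by omega), Nat.sub_self]
      rw [hb, show t + 2 + b - t + 1 = b + 3 from by omega,
        show t + 2 + b - (t + 1) = b + 1 from by omega, q]
      simp only [pow_add, pow_succ, pow_zero, pow_one]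
      ring
    · have hm : m = t + 1 := by omega
      rw [if_neg htm]
      rw [mul_add, sumLow m t t 1 (by omega)]
      rw [gg, if_pos le_rfl, Nat.sub_self]
      rw [hm, show t + 1 - t + 1 = 2 from by omega, q]
      simp only [pow_add, pow_succ, pow_zero, pow_one]
      ring
  · -- t > j
    obtain ⟨c, rfl⟩ : ∃ c, t = j + 1 + c := ⟨t - j - 1, by omega⟩
    rw [if_neg (by omega)]
    by_cases htm : j + 1 + c + 1 < m
    · obtain ⟨e, he⟩ : ∃ e, m = j + 1 + c + 2 + e := ⟨m - (j + 1 + c) - 2, by omega⟩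
      rw [if_pos htm]
      rw [mul_add, sumHigh m j c (e + 2) (by omega)]
      rw [gg, if_neg (by omega), gg, if_neg (by omega)]
      rw [he, show j + 1 + c + 2 + e - (j + 1 + c) = e + 2 from by omega,
        show j + 1 + c + 2 + e - (j + 1 + c + 1) = e + 1 from by omega,
        show j + 1 + c + 2 + e - j + 1 = c + e + 4 from by omega, q]
      simp only [pow_add, pow_succ, pow_zero, pow_one]
      ring
    · have hm : m = j + 1 + c + 1 := by omega
      rw [if_neg htm]
      rw [mul_add, sumHigh m j c 1 (by omega)]
      rw [gg, if_neg (by omega)]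
      rw [hm, show j + 1 + c + 1 - (j + 1 + c) = 1 from by omega,
        show j + 1 + c + 1 - j + 1 = c + 3 from by omega, q]
      simp only [pow_add, pow_succ, pow_zero, pow_one]
      ring
noncomputable def Kden (m j : ℕ) : PowerSeries ℤ :=
  (PowerSeries.invOfUnit (1 + X) 1) ^ (j + 2) * PowerSeries.invOfUnit (1 - X) 1 *
    PowerSeries.invOfUnit (1 - X ^ (m + 2)) 1

noncomputable def G (m j : ℕ) (t : ℕ) : PowerSeries ℤ := gg m j t * q * Kden m j

lemma inv_one_aux (f : PowerSeries ℤ) (h : constantCoeff f = 1) :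
    f * PowerSeries.invOfUnit f 1 = 1 :=
  PowerSeries.mul_invOfUnit f 1 (by rw [h]; rfl)

lemma inv1p : ((1 : PowerSeries ℤ) + X) * PowerSeries.invOfUnit (1 + X) 1 = 1 :=
  inv_one_aux _ (by simp)

lemma inv1m : ((1 : PowerSeries ℤ) - X) * PowerSeries.invOfUnit (1 - X) 1 = 1 :=
  inv_one_aux _ (by simp)

lemma invm2 (m : ℕ) :
    ((1 : PowerSeries ℤ) - X ^ (m + 2)) * PowerSeries.invOfUnit (1 - X ^ (m + 2)) 1 = 1 :=
  inv_one_aux _ (by simp)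

lemma K_inv (m j : ℕ) :
    ((1 + X) ^ (j + 2) * (1 - X) * (1 - X ^ (m + 2))) * Kden m j = 1 := by
  rw [Kden]
  calc (((1 : PowerSeries ℤ) + X) ^ (j + 2) * (1 - X) * (1 - X ^ (m + 2))) *
        ((PowerSeries.invOfUnit (1 + X) 1) ^ (j + 2) * PowerSeries.invOfUnit (1 - X) 1 *
          PowerSeries.invOfUnit (1 - X ^ (m + 2)) 1)
      = ((1 + X) * PowerSeries.invOfUnit (1 + X) 1) ^ (j + 2) *
          (((1 - X) * PowerSeries.invOfUnit (1 - X) 1) *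
            ((1 - X ^ (m + 2)) * PowerSeries.invOfUnit (1 - X ^ (m + 2)) 1)) := by
        rw [mul_pow]; ring
    _ = 1 := by rw [inv1p, inv1m, invm2, one_pow, one_mul, one_mul]

lemma Gsys (m j : ℕ) (hj : j + 1 ≤ m) (t : ℕ) (ht : t < m) :
    G m j t = C (if t = j then 1 else 0) +
      w * ((if t + 1 < m then G m j (t + 1) else 0) + ∑ h ∈ range t, G m j h) := by
  have hE := Everify m j hj t ht
  have hif : (if t + 1 < m then G m j (t + 1) else 0)
      = (if t + 1 < m then gg m j (t + 1) else 0) * (q * Kden m j) := by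
    split_ifs
    · rw [G]; ring
    · ring
  have hsum : (∑ h ∈ range t, G m j h) = (∑ h ∈ range t, gg m j h) * (q * Kden m j) := by
    rw [Finset.sum_mul]
    exact Finset.sum_congr rfl fun h _ => by rw [G]; ring
  have hC : (C (if t = j then 1 else 0) : PowerSeries ℤ)
      = (if t = j then (1 + X) ^ (j + 2) * (1 - X) * (1 - X ^ (m + 2)) else 0) * Kden m j := by
    split_ifs
    · rw [map_one, K_inv]
    · rw [map_zero, zero_mul]
  rw [hif, hsum, hC, G, w_eq]
  linear_combination (Kden m j) * hE -
    (X * ((if t + 1 < m then gg m j (t + 1) else 0) + ∑ h ∈ range t, gg m j h) * Kden m j) *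
      q_mul_iq

lemma dSysZero (m : ℕ) (d : ℕ → PowerSeries ℤ)
    (hd : ∀ t, t < m →
      d t = w * ((if t + 1 < m then d (t + 1) else 0) + ∑ h ∈ range t, d h)) :
    ∀ t, t < m → d t = 0 := by
  have key : ∀ N t, t < m → coeff N (d t) = 0 := by
    intro N
    induction N using Nat.strong_induction_on with
    | _ N ih =>
      intro t ht
      rw [hd t ht, w_eq, mul_assoc]
      have hF : ∀ k, k < N →
          coeff k ((if t + 1 < m then d (t + 1) else 0) + ∑ h ∈ range t, d h) = 0 := by
        intro k hk
        rw [map_add]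
        have h1 : coeff k (if t + 1 < m then d (t + 1) else 0) = 0 := by
          split_ifs with h
          · exact ih k hk (t + 1) h
          · simp
        rw [h1, zero_add, map_sum]
        exact Finset.sum_eq_zero fun h hh => ih k hk h (lt_trans (Finset.mem_range.mp hh) ht)
      rcases N with _ | M
      · rw [PowerSeries.coeff_zero_eq_constantCoeff, map_mul]
        simp
      · rw [PowerSeries.coeff_succ_X_mul, PowerSeries.coeff_mul]
        apply Finset.sum_eq_zero
        intro p hp
        have : coeff p.2 ((if t + 1 < m then d (t + 1) else 0) + ∑ h ∈ range t, d h) = 0 := by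
          apply hF
          have := Finset.HasAntidiagonal.antidiagonal.snd_le hp
          omega
        rw [this, mul_zero]
  intro t ht
  ext N
  rw [key N t ht, map_zero]
noncomputable def Sser (m j : ℕ) (t : ℕ) : PowerSeries ℤ :=
  series (fun n => pathCount n (t : ℤ) (j : ℤ) (Pm m))

lemma pathCount_out (m : ℕ) (n : ℕ) (a b : ℤ) (ha : ¬ Pm m a) :
    pathCount n a b (Pm m) = 0 := by
  rw [pathCount_eq]
  have : IsEmpty (PathT m n a b) := ⟨fun p => ha (p.2.1 ▸ p.2.2.2.1 0)⟩
  exact Nat.card_of_isEmpty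

lemma Ssys (m j : ℕ) (hj : j + 1 ≤ m) (t : ℕ) (ht : t < m) :
    Sser m j t = C (if t = j then 1 else 0) +
      w * ((if t + 1 < m then Sser m j (t + 1) else 0) + ∑ h ∈ range t, Sser m j h) := by
  have hPt : Pm m (t : ℤ) := ⟨by omega, by omega⟩
  rw [Sser, series_shift]
  congr 1
  · rw [pathCount_zero m _ _ hPt]
    have : ((t : ℤ) = (j : ℤ)) ↔ (t = j) := Nat.cast_inj
    split_ifs with h1 h2 h2 <;> simp_all
  · congr 1
    have hrec : (fun n => pathCount (n + 1) (t : ℤ) (j : ℤ) (Pm m)) =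
        fun n => pathCount n ((t : ℤ) + 1) (j : ℤ) (Pm m) +
          ∑ c ∈ Finset.Icc (0 : ℤ) ((t : ℤ) - 1), pathCount n c (j : ℤ) (Pm m) :=
      funext fun n => pathCount_succ m n (t : ℤ) (j : ℤ) hPt
    rw [hrec, series_add, series_sum]
    congr 1
    · by_cases h : t + 1 < m
      · rw [if_pos h, Sser]
        have : ((t : ℤ) + 1) = ((t + 1 : ℕ) : ℤ) := by push_cast; ring
        rw [this]
      · rw [if_neg h]
        have hout : ∀ n, pathCount n ((t : ℤ) + 1) (j : ℤ) (Pm m) = 0 := by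
          intro n
          apply pathCount_out
          rw [Pm]
          push_neg
          intro _
          omega
        have : (fun n => pathCount n ((t : ℤ) + 1) (j : ℤ) (Pm m)) = fun _ => 0 :=
          funext hout
        rw [this, series_zero]
    · have himg : Finset.Icc (0 : ℤ) ((t : ℤ) - 1)
          = (Finset.range t).image (fun h : ℕ => (h : ℤ)) := by
        ext c
        simp only [Finset.mem_Icc, Finset.mem_image, Finset.mem_range]
        constructor
        · intro hc
          exact ⟨c.toNat, by omega, by omega⟩
        · rintro ⟨h, hh, rfl⟩
          omega
      rw [himg, Finset.sum_image (fun x _ y _ hxy => by exact_mod_cast hxy)]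
      rfl

theorem stmt1 (m t j : ℕ) (hm : 1 ≤ m) (htj : t ≤ j) (hjm : j ≤ m - 1) :
    (series fun n => pathCount n t j (fun x => 0 ≤ x ∧ x ≤ (m : ℤ) - 1)) *
        (1 - X) * (1 + X) ^ (j - t + 2) * (1 - X ^ (m + 2)) =
      X ^ (j - t) * (1 - X ^ (t + 2)) * (1 - X ^ (m - j + 1)) * q := by
  have hj : j + 1 ≤ m := by omega
  have hSG : ∀ s, s < m → Sser m j s = G m j s := by
    have hd : ∀ s, s < m → (fun s => Sser m j s - G m j s) s =
        w * ((if s + 1 < m then (fun s => Sser m j s - G m j s) (s + 1) else 0) +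
          ∑ h ∈ range s, (fun s => Sser m j s - G m j s) h) := by
      intro s hs
      simp only
      rw [Ssys m j hj s hs, Gsys m j hj s hs]
      have hifd : (if s + 1 < m then Sser m j (s + 1) - G m j (s + 1) else 0)
          = (if s + 1 < m then Sser m j (s + 1) else 0) -
            (if s + 1 < m then G m j (s + 1) else 0) := by
        split_ifs <;> ring
      rw [hifd, Finset.sum_sub_distrib]
      ring
    intro s hs
    have := dSysZero m (fun s => Sser m j s - G m j s) hd s hs
    exact sub_eq_zero.mp this
  have hS : Sser m j t = G m j t := hSG t (by omega)
  have hser : (series fun n => pathCount n t j (fun x => 0 ≤ x ∧ x ≤ (m : ℤ) - 1))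
      = Sser m j t := rfl
  rw [hser, hS, G, gg, if_pos htj, Kden]
  have hpow : ((1 : PowerSeries ℤ) + X) ^ t * (1 + X) ^ (j - t + 2) = (1 + X) ^ (j + 2) := by
    rw [← pow_add]
    congr 1
    omega
  calc X ^ (j - t) * (1 + X) ^ t * (1 - X ^ (t + 2)) * (1 - X ^ (m - j + 1)) * q *
        (PowerSeries.invOfUnit (1 + X) 1 ^ (j + 2) * PowerSeries.invOfUnit (1 - X) 1 *
          PowerSeries.invOfUnit (1 - X ^ (m + 2)) 1) *
        (1 - X) * (1 + X) ^ (j - t + 2) * (1 - X ^ (m + 2))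
      = (X ^ (j - t) * (1 - X ^ (t + 2)) * (1 - X ^ (m - j + 1)) * q) *
          ((((1 + X) ^ t * (1 + X) ^ (j - t + 2)) * PowerSeries.invOfUnit (1 + X) 1 ^ (j + 2)) *
            (((1 - X) * PowerSeries.invOfUnit (1 - X) 1)) *
            (((1 - X ^ (m + 2)) * PowerSeries.invOfUnit (1 - X ^ (m + 2)) 1))) := by
        ring
    _ = X ^ (j - t) * (1 - X ^ (t + 2)) * (1 - X ^ (m - j + 1)) * q := by
        rw [hpow, ← mul_pow, inv1p, inv1m, invm2, one_pow, one_mul, mul_one, mul_one]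
end

section
/- Let K = ℚ(v) be the field of rational functions over ℚ and set z = v/(1+v+v²) in K. For m ≥ 0 let D_m = det M_m, where M_m is the m×m matrix over K with (0-indexed) entries M_{ij} = 1 if i = j, M_{ij} = -z if j = i-1 or j > i, and M_{ij} = 0 if j < i-1 (so D_0 = 1). Then for every m ≥ 0: (1+v+v²)² · D_{m+2} - (1+v+v²) · (1+v)² · D_{m+1} + v · (1+v)² · D_m = 0. -/
open Finset

/-- The variable `v` in the field of rational functions `ℚ(v)`. -/
noncomputable def v : RatFunc ℚ := RatFunc.X

/-- `z = v / (1 + v + v²)` in `ℚ(v)`. -/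
noncomputable def z : RatFunc ℚ := v / (1 + v + v ^ 2)

/-- The `m × m` matrix with `1` on the diagonal, `-z` on the subdiagonal and
everywhere strictly above the diagonal, and `0` below the subdiagonal. -/
noncomputable def M (m : ℕ) : Matrix (Fin m) (Fin m) (RatFunc ℚ) :=
  fun i j =>
    if (i : ℕ) = (j : ℕ) then 1
    else if (j : ℕ) + 1 = (i : ℕ) ∨ (i : ℕ) < (j : ℕ) then -z
    else 0

/-- `D m` is the determinant of `M m`. -/
noncomputable def D (m : ℕ) : RatFunc ℚ := (M m).det

lemma M_diag {m : ℕ} {i j : Fin m} (h : (i : ℕ) = (j : ℕ)) : M m i j = 1 := by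
  simp [M, h]

lemma M_mz {m : ℕ} {i j : Fin m} (h : (j : ℕ) + 1 = (i : ℕ) ∨ (i : ℕ) < (j : ℕ)) :
    M m i j = -z := by
  have hne : (i : ℕ) ≠ (j : ℕ) := by omega
  simp only [M]
  rw [if_neg hne, if_pos h]

lemma M_zero {m : ℕ} {i j : Fin m} (h : (j : ℕ) + 1 < (i : ℕ)) : M m i j = 0 := by
  have h1 : (i : ℕ) ≠ (j : ℕ) := by omega
  have h2 : ¬((j : ℕ) + 1 = (i : ℕ) ∨ (i : ℕ) < (j : ℕ)) := by omega
  simp only [M]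
  rw [if_neg h1, if_neg h2]

lemma M_shift (n : ℕ) : (M (n+1)).submatrix Fin.succ Fin.succ = M n := by
  ext i j
  simp only [Matrix.submatrix_apply, M, Fin.val_succ]
  simp only [show ((i:ℕ)+1 = (j:ℕ)+1) ↔ ((i:ℕ) = j) from by omega,
    show ((j:ℕ)+1+1 = (i:ℕ)+1 ∨ (i:ℕ)+1 < (j:ℕ)+1) ↔ ((j:ℕ)+1 = i ∨ (i:ℕ) < j) from by omega]

lemma updateRow_shift (n : ℕ) (u : Fin (n+1) → RatFunc ℚ) :
    ((M (n+1)).updateRow 0 u).submatrix Fin.succ Fin.succ = M n := by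
  ext i j
  have h := congrFun (congrFun (M_shift n) i) j
  simp only [Matrix.submatrix_apply] at h ⊢
  rw [Matrix.updateRow_apply, if_neg (Fin.succ_ne_zero i), h]

lemma det_single (n : ℕ) :
    ((M (n+1)).updateRow 0 (Pi.single 0 1)).det = D n := by
  rw [Matrix.det_succ_row_zero, Fin.sum_univ_succ]
  have h0 : ((M (n+1)).updateRow 0 (Pi.single 0 1)) 0 0 = 1 := by
    simp [Matrix.updateRow_apply]
  have hrest : ∀ j : Fin n, ((M (n+1)).updateRow 0 (Pi.single 0 1)) 0 j.succ = 0 := by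
    intro j
    simp [Matrix.updateRow_apply, Pi.single_eq_of_ne (Fin.succ_ne_zero j)]
  rw [h0]
  simp only [hrest, mul_zero, zero_mul, Finset.sum_const_zero, add_zero]
  rw [Fin.succAbove_zero, updateRow_shift]
  simp [D]

set_option synthInstance.maxHeartbeats 1000000 in
lemma key (m : ℕ) : D (m+2) = (1+z) * D (m+1) - z * (1+z) * D m := by
  have expand := Matrix.det_succ_column_zero (M (m+2))
  rw [Fin.sum_univ_succ, Fin.sum_univ_succ] at expand
  have htail : ∀ i : Fin m, (-1:RatFunc ℚ) ^ ((i.succ.succ : Fin (m+2)) : ℕ) *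
      (M (m+2)) i.succ.succ 0 * ((M (m+2)).submatrix i.succ.succ.succAbove Fin.succ).det = 0 := by
    intro i
    rw [M_zero (by simp [Fin.val_succ]), mul_zero, zero_mul]
  simp only [htail, Finset.sum_const_zero, add_zero] at expand
  rw [M_diag (by simp), M_mz (by simp [Fin.val_succ])] at expand
  rw [Fin.succAbove_zero, M_shift] at expand
  -- identify the second minor
  have hN : (M (m+2)).submatrix ((Fin.succ 0 : Fin (m+2)).succAbove) Fin.succ
      = (M (m+1)).updateRow 0 (fun _ => -z) := by
    ext a b
    simp only [Matrix.submatrix_apply]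
    by_cases ha : a = 0
    · subst ha
      have hA : (Fin.succ 0 : Fin (m+2)).succAbove (0 : Fin (m+1)) = Fin.castSucc 0 :=
        Fin.succAbove_of_castSucc_lt _ _ (by rw [Fin.lt_def]; simp)
      rw [hA, Matrix.updateRow_apply, if_pos rfl]
      exact M_mz (by simp [Fin.val_succ])
    · have hpos : 0 < (a : ℕ) := by
        rcases Nat.eq_zero_or_pos (a : ℕ) with h | h
        · exact absurd (Fin.ext h) ha
        · exact h
      have hA : (Fin.succ 0 : Fin (m+2)).succAbove a = a.succ :=
        Fin.succAbove_of_le_castSucc _ _ (by rw [Fin.le_def]; simp; omega)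
      rw [hA, Matrix.updateRow_apply, if_neg ha]
      have h := congrFun (congrFun (M_shift (m+1)) a) b
      simpa [Matrix.submatrix_apply] using h
  rw [hN] at expand
  -- compute det of the updated matrix by multilinearity
  have hrow : (fun _ : Fin (m+1) => -z)
      = (M (m+1)) 0 + (-(1+z)) • (Pi.single 0 1 : Fin (m+1) → RatFunc ℚ) := by
    funext j
    by_cases hj : j = 0
    · subst hj
      rw [Pi.add_apply, Pi.smul_apply, Pi.single_eq_same, M_diag rfl, smul_eq_mul]
      ring
    · rw [Pi.add_apply, Pi.smul_apply, Pi.single_eq_of_ne hj, smul_zero, add_zero]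
      have hpos : 0 < (j : ℕ) := by
        rcases Nat.eq_zero_or_pos (j : ℕ) with h | h
        · exact absurd (Fin.ext h) hj
        · exact h
      exact (M_mz (by simp [hpos])).symm
  have hdetN : ((M (m+1)).updateRow 0 (fun _ => -z)).det = D (m+1) - (1+z) * D m := by
    rw [hrow, Matrix.det_updateRow_add, Matrix.det_updateRow_smul,
      Matrix.updateRow_eq_self, det_single]
    show (M (m+1)).det + _ = _
    rw [show D (m+1) = (M (m+1)).det from rfl]
    ring
  rw [hdetN] at expand
  rw [show (M (m+1)).det = D (m+1) from rfl] at expand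
  rw [show D (m+2) = (M (m+2)).det from rfl, expand]
  simp only [Fin.val_zero, Fin.val_succ, pow_zero, pow_one]
  ring

lemma hv_ne : (1 + v + v ^ 2 : RatFunc ℚ) ≠ 0 := by
  have h : (1 + v + v ^ 2 : RatFunc ℚ)
      = algebraMap (Polynomial ℚ) (RatFunc ℚ) (1 + Polynomial.X + Polynomial.X ^ 2) := by
    simp [v, RatFunc.algebraMap_X, map_add, map_pow, map_one]
  rw [h]
  apply RatFunc.algebraMap_ne_zero
  intro hc
  have := congrArg (Polynomial.eval 0) hc
  simp at this

theorem stmt5 (m : ℕ) :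
    (1 + v + v ^ 2) ^ 2 * D (m + 2) - (1 + v + v ^ 2) * (1 + v) ^ 2 * D (m + 1)
      + v * (1 + v) ^ 2 * D m = 0 := by
  rw [key]
  have hz : z * (1 + v + v ^ 2) = v := by
    rw [z, div_mul_cancel₀ _ hv_ne]
  have h2 : (1 + v + v ^ 2) * (1 + z) = (1 + v) ^ 2 := by
    rw [mul_add, mul_one, mul_comm, hz]; ring
  have h3 : (1 + v + v ^ 2) ^ 2 * (z * (1 + z)) = v * (1 + v) ^ 2 := by
    calc (1 + v + v ^ 2) ^ 2 * (z * (1 + z))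
        = (z * (1 + v + v ^ 2)) * ((1 + v + v ^ 2) * (1 + z)) := by ring
      _ = v * (1 + v) ^ 2 := by rw [hz, h2]
  linear_combination D (m + 1) * (1 + v + v ^ 2) * h2 - D m * h3
end

section
/- Let K = ℚ(v), set z = v/(1+v+v²) in K, and for m ≥ 1 let M_m be the m×m matrix over K with (0-indexed) entries M_{ij} = 1 if i = j, M_{ij} = -z if j = i-1 or j > i, and M_{ij} = 0 if j < i-1. For 0 ≤ t ≤ m-1 and 0 ≤ j ≤ m-1, let D(m;t,j) be the determinant of the matrix obtained from M_m by replacing its j-th column with the standard basis vector e_t (the column with 1 in row t and 0 elsewhere). Then for 0 ≤ j < t ≤ m-1: D(m;t,j) · (1-v)² · (1+v+v²)^{m-1} · (1+v)^{j+3} = (1+v)^{t+m} · (1-v^{j+1}) · v · (1-v^{m-t}). -/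
open Finset

set_option maxHeartbeats 2000000
set_option synthInstance.maxHeartbeats 400000

/-- The determinant of `M m` with its `j`-th column replaced by the standard
basis vector `e t`. -/
noncomputable def Dcramer (m : ℕ) (t : ℕ) (j : Fin m) : RatFunc ℚ :=
  ((M m).updateCol j (fun i => if (i : ℕ) = t then 1 else 0)).det

lemma v_ne : v ≠ 0 := RatFunc.X_ne_zero

lemma poly_ne (p : Polynomial ℚ) (hp : p.coeff 0 ≠ 0) :
    Polynomial.aeval v p ≠ 0 := by
  have h : p ≠ 0 := fun h0 => hp (by simp [h0])
  have h2 : Polynomial.aeval v p = algebraMap (Polynomial ℚ) (RatFunc ℚ) p := by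
    have h3 := Polynomial.aeval_algHom_apply
      (IsScalarTower.toAlgHom ℚ (Polynomial ℚ) (RatFunc ℚ)) Polynomial.X p
    simpa [RatFunc.algebraMap_X, v] using h3
  rw [h2]
  exact RatFunc.algebraMap_ne_zero h

lemma one_sub_pow_ne (k : ℕ) (hk : 1 ≤ k) : (1 : RatFunc ℚ) - v ^ k ≠ 0 := by
  have hc : (1 - Polynomial.X ^ k : Polynomial ℚ).coeff 0 = 1 := by
    rw [Polynomial.coeff_sub, Polynomial.coeff_one, Polynomial.coeff_X_pow,
      if_pos rfl, if_neg (by omega)]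
    norm_num
  have := poly_ne (1 - Polynomial.X ^ k) (by rw [hc]; norm_num)
  simpa using this

lemma u_ne : (1 : RatFunc ℚ) + v ≠ 0 := by
  have := poly_ne (1 + Polynomial.X) (by simp)
  simpa using this

lemma c_ne : (1 : RatFunc ℚ) + v + v ^ 2 ≠ 0 := by
  have := poly_ne (1 + Polynomial.X + Polynomial.X ^ 2) (by simp)
  simpa using this

lemma one_sub_v_ne : (1 : RatFunc ℚ) - v ≠ 0 := by
  simpa using one_sub_pow_ne 1 le_rfl

lemma z_mul_c : z * (1 + v + v ^ 2) = v := by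
  rw [z, div_mul_cancel₀ _ c_ne]

lemma oz_mul_c : (1 + z) * (1 + v + v ^ 2) = (1 + v) ^ 2 := by
  rw [add_mul, one_mul, z_mul_c]; ring

lemma z_mul_form (Q : RatFunc ℚ) : z * ((1 + v + v ^ 2) * Q) = v * Q := by
  rw [← mul_assoc, z_mul_c]

lemma oz_mul_form (Q : RatFunc ℚ) :
    (1 + z) * ((1 + v + v ^ 2) * Q) = (1 + v) ^ 2 * Q := by
  rw [← mul_assoc, oz_mul_c]

/-- explicit solution vector -/
noncomputable def xvec (m t k : ℕ) : RatFunc ℚ :=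
  if k < t then
    (1 + v + v ^ 2) * (v * (1 + v) ^ (t - k + 1) * (1 - v ^ (k + 1)) * (1 - v ^ (m - t)) /
      ((1 - v) * (1 - v ^ (m + 2)) * (1 + v) ^ 3))
  else
    (1 + v + v ^ 2) * (v ^ (k - t) * (1 - v ^ (t + 2)) * (1 - v ^ (m + 1 - k)) /
      ((1 - v) * (1 - v ^ (m + 2)) * (1 + v) ^ (k - t + 2)))

/-- explicit tail sums -/
noncomputable def Ftail (m t p : ℕ) : RatFunc ℚ :=
  if p ≤ t then
    (1 + v + v ^ 2) * ((1 - v ^ (m - t)) * (1 + v) ^ (t - p + 2) * (1 - v ^ (p + 2)) /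
      ((1 - v) * (1 - v ^ (m + 2)) * (1 + v) ^ 3))
  else
    (1 + v + v ^ 2) * ((1 - v ^ (t + 2)) * v ^ (p - t) * (1 - v ^ (m - p)) /
      ((1 - v) * (1 - v ^ (m + 2)) * (1 + v) ^ (p - t + 1)))

lemma Ftail_last (m t : ℕ) (ht : t < m) : Ftail m t m = 0 := by
  rw [Ftail, if_neg (by omega), Nat.sub_self]
  simp

lemma Ftail_step (m t p : ℕ) (ht : t < m) (hp : p < m) :
    Ftail m t p = xvec m t p + Ftail m t (p + 1) := by
  have hu := u_ne
  have h1 := one_sub_v_ne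
  have hW := one_sub_pow_ne (m + 2) (by omega)
  rcases lt_trichotomy p t with h | h | h
  · -- p < t
    obtain ⟨a, ha⟩ : ∃ a, t = p + 1 + a := ⟨t - p - 1, by omega⟩
    rw [Ftail, if_pos (by omega), Ftail, if_pos (by omega), xvec, if_pos (by omega),
      show t - p + 2 = a + 3 by omega, show t - (p + 1) + 2 = a + 2 by omega,
      show t - p + 1 = a + 2 by omega]
    field_simp
    ring
  · -- p = t
    subst h
    obtain ⟨b, hb⟩ : ∃ b, m = p + 1 + b := ⟨m - p - 1, by omega⟩
    subst hb
    rw [Ftail, if_pos le_rfl, Ftail, if_neg (by omega), xvec, if_neg (by omega)]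
    simp only [show p - p + 2 = 2 from by omega, show p + 1 - p = 1 from by omega,
      show p + 1 - p + 1 = 2 from by omega, show p - p = 0 from by omega,
      show p + 1 + b - p = b + 1 from by omega,
      show p + 1 + b + 1 - p = b + 2 from by omega,
      show p + 1 + b - (p + 1) = b from by omega, show 1 + 1 = 2 from rfl]
    field_simp
    ring
  · -- p > t
    obtain ⟨a, ha⟩ : ∃ a, p = t + 1 + a := ⟨p - t - 1, by omega⟩
    obtain ⟨b, hb⟩ : ∃ b, m = p + 1 + b := ⟨m - p - 1, by omega⟩
    subst ha; subst hb
    rw [Ftail, if_neg (by omega), Ftail, if_neg (by omega), xvec, if_neg (by omega)]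
    simp only [show t + 1 + a - t = a + 1 from by omega,
      show t + 1 + a + 1 - t = a + 2 from by omega,
      show t + 1 + a + 1 + b - (t + 1 + a) = b + 1 from by omega,
      show t + 1 + a + 1 + b + 1 - (t + 1 + a) = b + 2 from by omega,
      show t + 1 + a + 1 + b - (t + 1 + a + 1) = b from by omega,
      show a + 1 + 1 = a + 2 from by omega, show a + 2 + 1 = a + 3 from by omega,
      show a + 1 + 2 = a + 3 from by omega]
    field_simp
    ring

lemma tail_sum (m t : ℕ) (ht : t < m) :
    ∀ d p, p + d = m → (∑ k ∈ Finset.Ico p m, xvec m t k) = Ftail m t p := by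
  intro d
  induction d with
  | zero => intro p hp; rw [show p = m by omega]; simp [Ftail_last m t ht]
  | succ d ih =>
    intro p hp
    rw [Finset.sum_eq_sum_Ico_succ_bot (by omega : p < m), ih (p + 1) (by omega),
      ← Ftail_step m t p ht (by omega)]

lemma row_identity (m t i : ℕ) (ht1 : 1 ≤ t) (htm : t < m) (hi : i < m) :
    (1 + z) * xvec m t i - z * Ftail m t (i - 1) =
      (if i = t then 1 else 0) := by
  have hu := u_ne
  have h1 := one_sub_v_ne
  have hW := one_sub_pow_ne (m + 2) (by omega)
  have hc := c_ne
  have hz : z = v / (1 + v + v ^ 2) := rfl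
  rcases Nat.lt_trichotomy i t with h | h | h
  · rw [if_neg (by omega)]
    rcases Nat.eq_zero_or_pos i with h0 | h0
    · subst h0
      obtain ⟨a, ha⟩ : ∃ a, t = 1 + a := ⟨t - 1, by omega⟩
      subst ha
      rw [xvec, if_pos (by omega), Ftail, if_pos (by omega)]
      simp only [Nat.sub_zero, show 1 + a - 0 + 1 = a + 2 from by omega,
        show 1 + a - (0 - 1) + 2 = a + 3 from by omega, show (0:ℕ) + 1 = 1 from rfl,
        show (0:ℕ) + 2 = 2 from rfl, show (0:ℕ) - 1 = 0 from rfl]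
      rw [z_mul_form, oz_mul_form]
      field_simp
      ring
    · obtain ⟨a, ha⟩ : ∃ a, t = i + 1 + a := ⟨t - i - 1, by omega⟩
      obtain ⟨b, hb⟩ : ∃ b, i = 1 + b := ⟨i - 1, by omega⟩
      subst ha; subst hb
      rw [xvec, if_pos (by omega), Ftail, if_pos (by omega)]
      simp only [show 1 + b + 1 + a - (1 + b) + 1 = a + 2 from by omega,
        show 1 + b - 1 = b from by omega,
        show 1 + b + 1 + a - b + 2 = a + 4 from by omega,
        show b + 2 = 1 + b + 1 from by omega]
      rw [z_mul_form, oz_mul_form]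
      field_simp
      ring
  · subst h
    rw [if_pos rfl]
    obtain ⟨a, ha⟩ : ∃ a, i = 1 + a := ⟨i - 1, by omega⟩
    obtain ⟨b, hb⟩ : ∃ b, m = i + 1 + b := ⟨m - i - 1, by omega⟩
    subst ha; subst hb
    rw [xvec, if_neg (by omega), Ftail, if_pos (by omega)]
    simp only [show 1 + a - (1 + a) = 0 from by omega,
      show 1 + a - (1 + a - 1) + 2 = 3 from by omega,
      show 1 + a - 1 + 2 = a + 2 from by omega,
      show 1 + a + 1 + b + 1 - (1 + a) = b + 2 from by omega,
      show 1 + a + 1 + b - (1 + a) = b + 1 from by omega,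
      show 1 + a - (1 + a) + 2 = 2 from by omega,
      show 1 + a + 2 = a + 3 from by omega,
]
    rw [z_mul_form, oz_mul_form]
    field_simp
    ring
  · rw [if_neg (by omega)]
    rcases Nat.eq_or_lt_of_le (by omega : t + 1 ≤ i) with h2 | h2
    · -- i = t + 1 : Ftail (i-1) = Ftail t uses first branch
      obtain ⟨b, hb⟩ : ∃ b, m = i + 1 + b := ⟨m - i - 1, by omega⟩
      subst hb
      rw [← h2]
      rw [xvec, if_neg (by omega), Ftail, if_pos (by omega)]
      simp only [show t + 1 - t = 1 from by omega,
        show t + 1 - 1 = t from by omega,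
        show t - t + 2 = 2 from by omega,
        show t + 1 - t + 2 = 3 from by omega,
        show t + 1 + 1 + b - t = b + 2 from by omega,
        show t + 1 + 1 + b + 1 - (t + 1) = b + 2 from by omega,
        show t + 1 + 1 + b - (t + 1 - 1) = b + 2 from by omega]
      rw [z_mul_form, oz_mul_form]
      field_simp
      ring
    · -- i ≥ t + 2
      obtain ⟨a, ha⟩ : ∃ a, i = t + 2 + a := ⟨i - t - 2, by omega⟩
      obtain ⟨b, hb⟩ : ∃ b, m = i + 1 + b := ⟨m - i - 1, by omega⟩
      subst ha; subst hb
      rw [xvec, if_neg (by omega), Ftail, if_neg (by omega)]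
      simp only [show t + 2 + a - t = a + 2 from by omega,
        show t + 2 + a - 1 - t = a + 1 from by omega,
        show t + 2 + a + 1 + b + 1 - (t + 2 + a) = b + 2 from by omega,
        show t + 2 + a + 1 + b - (t + 2 + a - 1) = b + 2 from by omega,
        show a + 2 + 2 = a + 4 from by omega, show a + 1 + 1 = a + 2 from by omega,
        show a + 2 + 1 = a + 3 from by omega]
      rw [z_mul_form, oz_mul_form]
      field_simp
      ring


lemma mulVec_xvec (m t : ℕ) (ht1 : 1 ≤ t) (htm : t < m) :
    (M m).mulVec (fun k => xvec m t (k : ℕ)) =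
      fun i : Fin m => if (i : ℕ) = t then (1 : RatFunc ℚ) else 0 := by
  funext i
  rw [Matrix.mulVec, dotProduct]
  have hsummand : ∀ k : Fin m, M m i k * xvec m t (k : ℕ) =
      (fun k : ℕ => (if k = (i : ℕ) then (1 + z) * xvec m t k else 0) +
        (if (i : ℕ) ≤ k + 1 then -z * xvec m t k else 0)) (k : ℕ) := by
    intro k
    show (if (i : ℕ) = (k : ℕ) then (1 : RatFunc ℚ)
      else if (k : ℕ) + 1 = (i : ℕ) ∨ (i : ℕ) < (k : ℕ) then -z else 0) * xvec m t (k : ℕ) =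
      (if (k : ℕ) = (i : ℕ) then (1 + z) * xvec m t (k : ℕ) else 0) +
        (if (i : ℕ) ≤ (k : ℕ) + 1 then -z * xvec m t (k : ℕ) else 0)
    rcases Nat.lt_trichotomy (i : ℕ) (k : ℕ) with h | h | h
    · rw [if_neg (by omega), if_pos (by omega), if_neg (by omega), if_pos (by omega)]
      ring
    · rw [if_pos h, if_pos (by omega), if_pos (by omega)]
      ring
    · rcases Nat.eq_or_lt_of_le (by omega : (k : ℕ) + 1 ≤ (i : ℕ)) with h2 | h2
      · rw [if_neg (by omega), if_pos (by omega), if_neg (by omega), if_pos (by omega)]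
        ring
      · rw [if_neg (by omega), if_neg (by omega), if_neg (by omega), if_neg (by omega)]
        ring
  have e0 : (∑ k : Fin m, M m i k * xvec m t (k : ℕ)) =
      ∑ k ∈ Finset.range m, ((if k = (i : ℕ) then (1 + z) * xvec m t k else 0) +
        (if (i : ℕ) ≤ k + 1 then -z * xvec m t k else 0)) := by
    rw [← Fin.sum_univ_eq_sum_range]
    exact Finset.sum_congr rfl (fun k _ => hsummand k)
  rw [e0, Finset.sum_add_distrib]
  have e1 : (∑ k ∈ Finset.range m, if k = (i : ℕ) then (1 + z) * xvec m t k else 0) =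
      (1 + z) * xvec m t (i : ℕ) := by
    rw [Finset.sum_ite_eq' (Finset.range m)]
    rw [if_pos (Finset.mem_range.mpr i.isLt)]
  have e2 : (∑ k ∈ Finset.range m, if (i : ℕ) ≤ k + 1 then -z * xvec m t k else 0) =
      -z * ∑ k ∈ Finset.Ico ((i : ℕ) - 1) m, xvec m t k := by
    rw [Finset.mul_sum, ← Finset.sum_filter]
    congr 1
    ext k
    simp only [Finset.mem_filter, Finset.mem_range, Finset.mem_Ico]
    omega
  rw [e1, e2, tail_sum m t htm (m - ((i : ℕ) - 1)) ((i : ℕ) - 1) (by omega)]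
  have := row_identity m t (i : ℕ) ht1 htm i.isLt
  rw [← this]
  ring



lemma cramer_mulVec_eq {n : ℕ} (A : Matrix (Fin n) (Fin n) (RatFunc ℚ))
    (x : Fin n → RatFunc ℚ) (j : Fin n) :
    A.cramer (A.mulVec x) j = A.det * x j := by
  have h1 : A.mulVec x = ∑ k, x k • A.transpose k := by
    funext i
    rw [Matrix.mulVec, dotProduct, Finset.sum_apply]
    exact Finset.sum_congr rfl fun k _ => by
      simp [Matrix.transpose_apply, mul_comm]
  rw [h1, map_sum]
  simp only [LinearMap.map_smul]
  have h2 : ∀ k, A.cramer (A.transpose k) = Pi.single k A.det := fun k =>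
    Matrix.cramer_row_self A (A.transpose k) k (fun i => rfl)
  simp only [h2]
  rw [Finset.sum_apply]
  simp only [Pi.smul_apply, Pi.single_apply, smul_eq_mul, mul_ite, mul_zero]
  rw [Finset.sum_ite_eq (Finset.univ : Finset (Fin n)) j (fun k => x k * A.det)]
  simp [mul_comm]

lemma Dcramer_eq (m t : ℕ) (ht1 : 1 ≤ t) (htm : t < m) (j : Fin m) :
    Dcramer m t j = D m * xvec m t (j : ℕ) := by
  have h0 : Dcramer m t j =
      (M m).cramer (fun i : Fin m => if (i : ℕ) = t then (1 : RatFunc ℚ) else 0) j := rfl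
  rw [h0, ← mulVec_xvec m t ht1 htm, cramer_mulVec_eq, D]

noncomputable def Mz (m : ℕ) : Matrix (Fin m) (Fin m) (RatFunc ℚ) :=
  fun i j => if (i : ℕ) = 0 then -z else M m i j

noncomputable def Rz (m : ℕ) : RatFunc ℚ := (Mz m).det

lemma val_succAbove_one {n : ℕ} (i : Fin (n + 1)) :
    (((1 : Fin (n + 2)).succAbove i : Fin (n + 2)) : ℕ) =
      if (i : ℕ) < 1 then (i : ℕ) else (i : ℕ) + 1 := by
  rw [Fin.succAbove]
  split_ifs with h h2 h3
  · simp
  · exfalso; apply h2; simpa [Fin.lt_def] using h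
  · exfalso; apply h; simpa [Fin.lt_def] using h3
  · simp

lemma subM0 (n : ℕ) : (M (n + 2)).submatrix ((0 : Fin (n + 2)).succAbove) Fin.succ
    = M (n + 1) := by
  ext i j
  simp only [Matrix.submatrix_apply, Fin.zero_succAbove, M, Fin.val_succ]
  split_ifs <;> first | rfl | omega | exact False.elim (by assumption) | (simp_all [Fin.ext_iff] <;> omega)

lemma subM1 (n : ℕ) : (M (n + 2)).submatrix ((1 : Fin (n + 2)).succAbove) Fin.succ
    = Mz (n + 1) := by
  ext i j
  simp only [Matrix.submatrix_apply, Mz, M, Fin.val_succ, val_succAbove_one]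
  split_ifs <;> first | rfl | omega | exact False.elim (by assumption)

lemma subMz0 (n : ℕ) : (Mz (n + 2)).submatrix ((0 : Fin (n + 2)).succAbove) Fin.succ
    = M (n + 1) := by
  ext i j
  simp only [Matrix.submatrix_apply, Fin.zero_succAbove, Mz, M, Fin.val_succ]
  split_ifs <;> first | rfl | omega | exact False.elim (by assumption) | (simp only [show ((i:ℕ) + 1 = (j:ℕ) + 1) = ((i:ℕ) = j) from propext (by omega), show ((j:ℕ) + 1 + 1 = (i:ℕ) + 1 ∨ (i:ℕ) + 1 < (j:ℕ) + 1) = ((j:ℕ) + 1 = i ∨ (i:ℕ) < j) from propext (by omega)])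

lemma subMz1 (n : ℕ) : (Mz (n + 2)).submatrix ((1 : Fin (n + 2)).succAbove) Fin.succ
    = Mz (n + 1) := by
  ext i j
  simp only [Matrix.submatrix_apply, Mz, M, Fin.val_succ, val_succAbove_one]
  split_ifs <;> first | rfl | omega | exact False.elim (by assumption)

lemma D_rec (n : ℕ) : D (n + 2) = D (n + 1) + z * Rz (n + 1) := by
  rw [D, show (n + 2) = (n + 1) + 1 from rfl, Matrix.det_succ_column_zero,
    Fin.sum_univ_succ, Fin.sum_univ_succ]
  have h2 : ∀ i : Fin n, ((-1 : RatFunc ℚ)) ^ (((Fin.succ (Fin.succ i)) : Fin (n+2)) : ℕ) *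
      M (n + 2) (Fin.succ (Fin.succ i)) 0 *
      ((M (n+2)).submatrix (Fin.succAbove (Fin.succ (Fin.succ i))) Fin.succ).det = 0 := by
    intro i
    have : M (n + 2) (Fin.succ (Fin.succ i)) 0 = 0 := by
      simp only [M]
      rw [if_neg (by simp [Fin.val_succ]), if_neg (by simp [Fin.val_succ])]
    rw [this]; ring
  rw [Finset.sum_congr rfl (fun i _ => h2 i), Finset.sum_const_zero, add_zero]
  have hA00 : M (n + 2) 0 0 = 1 := by simp [M]
  have hA10 : M (n + 2) (Fin.succ 0) 0 = -z := by
    simp only [M]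
    rw [if_neg (by simp [Fin.val_succ]), if_pos (by simp [Fin.val_succ])]
  rw [hA00, hA10, subM0 n]
  have : ((1 : Fin (n + 2)).succAbove) = (Fin.succAbove (Fin.succ 0)) := by
    congr 1
  rw [← this, subM1 n]
  simp [D, Rz, Fin.val_succ]
  try ring

lemma Rz_rec (n : ℕ) : Rz (n + 2) = -z * D (n + 1) + z * Rz (n + 1) := by
  rw [Rz, show (n + 2) = (n + 1) + 1 from rfl, Matrix.det_succ_column_zero,
    Fin.sum_univ_succ, Fin.sum_univ_succ]
  have h2 : ∀ i : Fin n, ((-1 : RatFunc ℚ)) ^ (((Fin.succ (Fin.succ i)) : Fin (n+2)) : ℕ) *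
      Mz (n + 2) (Fin.succ (Fin.succ i)) 0 *
      ((Mz (n+2)).submatrix (Fin.succAbove (Fin.succ (Fin.succ i))) Fin.succ).det = 0 := by
    intro i
    have : Mz (n + 2) (Fin.succ (Fin.succ i)) 0 = 0 := by
      simp only [Mz, M]
      rw [if_neg (by simp [Fin.val_succ]), if_neg (by simp [Fin.val_succ]),
        if_neg (by simp [Fin.val_succ])]
    rw [this]; ring
  rw [Finset.sum_congr rfl (fun i _ => h2 i), Finset.sum_const_zero, add_zero]
  have hA00 : Mz (n + 2) 0 0 = -z := by simp [Mz]
  have hA10 : Mz (n + 2) (Fin.succ 0) 0 = -z := by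
    simp only [Mz, M]
    rw [if_neg (by simp [Fin.val_succ]), if_neg (by simp [Fin.val_succ]),
      if_pos (by simp [Fin.val_succ])]
  rw [hA00, hA10, subMz0 n]
  have : ((1 : Fin (n + 2)).succAbove) = (Fin.succAbove (Fin.succ 0)) := by
    congr 1
  rw [← this, subMz1 n]
  simp [D, Rz, Fin.val_succ]
  try ring

lemma D_Rz_closed : ∀ n : ℕ,
    D (n + 1) * ((1 - v) * (1 + v + v ^ 2) ^ (n + 1)) = (1 + v) ^ n * (1 - v ^ (n + 3)) ∧
    Rz (n + 1) * ((1 - v) * (1 + v + v ^ 2) ^ (n + 1)) = -v * (1 + v) ^ n * (1 - v ^ (n + 1)) := by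
  intro n
  induction n with
  | zero =>
    constructor
    · have h1 : D 1 = 1 := by
        rw [D, Matrix.det_fin_one]
        simp [M]
      rw [h1]; ring
    · have h1 : Rz 1 = -z := by
        rw [Rz, Matrix.det_fin_one]
        simp [Mz]
      rw [h1, show -z * ((1 - v) * (1 + v + v ^ 2) ^ 1) =
        -((z * (1 + v + v ^ 2)) * (1 - v)) from by ring, z_mul_c]
      ring
  | succ n ih =>
    obtain ⟨ih1, ih2⟩ := ih
    constructor
    · rw [D_rec n]
      calc (D (n + 1) + z * Rz (n + 1)) * ((1 - v) * (1 + v + v ^ 2) ^ (n + 1 + 1))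
          = (D (n + 1) * ((1 - v) * (1 + v + v ^ 2) ^ (n + 1))) * (1 + v + v ^ 2) +
            (z * (1 + v + v ^ 2)) * (Rz (n + 1) * ((1 - v) * (1 + v + v ^ 2) ^ (n + 1))) := by
            ring
        _ = ((1 + v) ^ n * (1 - v ^ (n + 3))) * (1 + v + v ^ 2) +
            v * (-v * (1 + v) ^ n * (1 - v ^ (n + 1))) := by rw [ih1, ih2, z_mul_c]
        _ = (1 + v) ^ (n + 1) * (1 - v ^ (n + 1 + 3)) := by ring
    · rw [Rz_rec n]
      calc (-z * D (n + 1) + z * Rz (n + 1)) * ((1 - v) * (1 + v + v ^ 2) ^ (n + 1 + 1))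
          = -((z * (1 + v + v ^ 2)) * (D (n + 1) * ((1 - v) * (1 + v + v ^ 2) ^ (n + 1)))) +
            (z * (1 + v + v ^ 2)) * (Rz (n + 1) * ((1 - v) * (1 + v + v ^ 2) ^ (n + 1))) := by
            ring
        _ = -(v * ((1 + v) ^ n * (1 - v ^ (n + 3)))) +
            v * (-v * (1 + v) ^ n * (1 - v ^ (n + 1))) := by rw [ih1, ih2, z_mul_c]
        _ = -v * (1 + v) ^ (n + 1) * (1 - v ^ (n + 1 + 1)) := by ring

theorem stmt6 (m t j : ℕ) (hm : 1 ≤ m) (hjt : j < t) (htm : t ≤ m - 1) :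
    Dcramer m t ⟨j, by omega⟩ * (1 - v) ^ 2 * (1 + v + v ^ 2) ^ (m - 1) * (1 + v) ^ (j + 3) =
      (1 + v) ^ (t + m) * (1 - v ^ (j + 1)) * v * (1 - v ^ (m - t)) := by
  have ht1 : 1 ≤ t := by omega
  have htm' : t < m := by omega
  rw [Dcramer_eq m t ht1 htm' ⟨j, by omega⟩]
  obtain ⟨a, ha⟩ : ∃ a, t = j + 1 + a := ⟨t - j - 1, by omega⟩
  obtain ⟨b, hb⟩ : ∃ b, m = t + 1 + b := ⟨m - t - 1, by omega⟩
  subst ha; subst hb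
  have hu := u_ne
  have h1 := one_sub_v_ne
  have hc := c_ne
  have hW := one_sub_pow_ne (j + 1 + a + 1 + b + 2) (by omega)
  show D (j + 1 + a + 1 + b) * xvec (j + 1 + a + 1 + b) (j + 1 + a) j * _ * _ * _ = _
  rw [xvec, if_pos (by omega)]
  simp only [show j + 1 + a - j + 1 = a + 2 from by omega,
    show j + 1 + a + 1 + b - (j + 1 + a) = b + 1 from by omega,
    show j + 1 + a + 1 + b - 1 = j + a + b + 1 from by omega]
  have hD := (D_Rz_closed (j + a + b + 1)).1
  rw [show j + a + b + 1 + 1 = j + 1 + a + 1 + b from by omega] at hD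
  have hDv : D (j + 1 + a + 1 + b) =
      (1 + v) ^ (j + a + b + 1) * (1 - v ^ (j + a + b + 1 + 3)) /
        ((1 - v) * (1 + v + v ^ 2) ^ (j + 1 + a + 1 + b)) := by
    rw [eq_div_iff (mul_ne_zero h1 (pow_ne_zero _ hc))]
    exact hD
  rw [hDv]
  have hW2 : (1 : RatFunc ℚ) - v ^ (j + a + b + 1 + 3) ≠ 0 := one_sub_pow_ne _ (by omega)
  field_simp
  ring
end
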